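/- If y₁ and y₂ are both optimal target states for the same initial state x (i.e., both minimize y ↦ W(y) + R(y − x) + K·1{y ≠ x} over Δ(n)), W is convex, R is convex and subadditive, then for every θ ∈ (0,1), the point ȳ = θy₁ + (1−θ)y₂ lies in the no-transfer region: W(ȳ) ≤ W(z) + R(z − ȳ) + K for all z ∈ Δ(n). -/
import Mathlib


/-- The simplex Δ(n). -/
def Delta (N : ℕ) (n : ℝ) : Set (Fin N → ℝ) :=
  {y | (∀ i, 0 ≤ y i) ∧ ∑ i, y i = n}

/-- Convex combinations of two optimal target states for the same initial state x
lie in the no-transfer region. -/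
theorem stmt_15 {N : ℕ} (n K : ℝ) (hn : 0 ≤ n) (hK : 0 ≤ K)
    (W R : (Fin N → ℝ) → ℝ)
    (hWconv : ConvexOn ℝ (Delta N n) W)
    (hWcont : ContinuousOn W (Delta N n))
    (hRconv : ConvexOn ℝ {z : Fin N → ℝ | ∑ i, z i = 0} R)
    (hRsub : ∀ a b : Fin N → ℝ, ∑ i, a i = 0 → ∑ i, b i = 0 →
      R (a + b) ≤ R a + R b)
    (hRhom : ∀ t : ℝ, 0 ≤ t → ∀ z : Fin N → ℝ, ∑ i, z i = 0 → R (t • z) = t * R z)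
    (hR0 : R 0 = 0) (hRnn : ∀ z, 0 ≤ R z)
    (x y₁ y₂ : Fin N → ℝ)
    (hx : x ∈ Delta N n) (hy₁ : y₁ ∈ Delta N n) (hy₂ : y₂ ∈ Delta N n)
    (hopt₁ : ∀ z ∈ Delta N n,
      W y₁ + R (y₁ - x) + (if y₁ ≠ x then K else 0) ≤
        W z + R (z - x) + (if z ≠ x then K else 0))
    (hopt₂ : ∀ z ∈ Delta N n,
      W y₂ + R (y₂ - x) + (if y₂ ≠ x then K else 0) ≤
        W z + R (z - x) + (if z ≠ x then K else 0))
    (θ : ℝ) (hθ : θ ∈ Set.Ioo (0:ℝ) 1) :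
    ∀ z ∈ Delta N n,
      W (θ • y₁ + (1 - θ) • y₂) ≤ W z + R (z - (θ • y₁ + (1 - θ) • y₂)) + K := by

  obtain ⟨hθ0, hθ1⟩ := hθ
  intro z hz
  set yb := θ • y₁ + (1 - θ) • y₂ with hyb
  have sum_of : ∀ a : Fin N → ℝ, a ∈ Delta N n → ∑ i, a i = n := fun a ha => ha.2
  have hsd : ∀ a b : Fin N → ℝ, a ∈ Delta N n → b ∈ Delta N n → ∑ i, (a - b) i = 0 := by
    intro a b ha hb
    simp only [Pi.sub_apply, Finset.sum_sub_distrib, ha.2, hb.2, sub_self]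
  have hyb_mem : yb ∈ Delta N n := by
    constructor
    · intro i
      have := hy₁.1 i; have := hy₂.1 i
      simp only [hyb, Pi.add_apply, Pi.smul_apply, smul_eq_mul]
      nlinarith
    · simp only [hyb, Pi.add_apply, Pi.smul_apply, smul_eq_mul, Finset.sum_add_distrib,
        ← Finset.mul_sum, hy₁.2, hy₂.2]
      ring
  have hWy : W yb ≤ θ * W y₁ + (1 - θ) * W y₂ :=
    hWconv.2 hy₁ hy₂ (le_of_lt hθ0) (by linarith) (by ring)
  have hconvR : R (yb - x) ≤ θ * R (y₁ - x) + (1 - θ) * R (y₂ - x) := by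
    have h := hRconv.2 (hsd y₁ x hy₁ hx) (hsd y₂ x hy₂ hx) (le_of_lt hθ0)
      (by linarith : (0:ℝ) ≤ 1 - θ) (by ring)
    have heq : θ • (y₁ - x) + (1 - θ) • (y₂ - x) = yb - x := by
      funext i
      simp only [hyb, Pi.add_apply, Pi.sub_apply, Pi.smul_apply, smul_eq_mul]
      ring
    rw [heq] at h
    simpa using h
  have hsub : R (z - x) ≤ R (z - yb) + R (yb - x) := by
    have h := hRsub (z - yb) (yb - x) (hsd z yb hz hyb_mem) (hsd yb x hyb_mem hx)
    have heq : (z - yb) + (yb - x) = z - x := by funext i; simp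
    rwa [heq] at h
  have h1 := hopt₁ z hz
  have h2 := hopt₂ z hz
  have hi1 : (0:ℝ) ≤ (if y₁ ≠ x then K else 0) := by split_ifs <;> linarith
  have hi2 : (0:ℝ) ≤ (if y₂ ≠ x then K else 0) := by split_ifs <;> linarith
  have hiz : (if z ≠ x then K else 0) ≤ K := by split_ifs <;> linarith
  nlinarith [mul_le_mul_of_nonneg_left h1 (le_of_lt hθ0),
    mul_le_mul_of_nonneg_left h2 (by linarith : (0:ℝ) ≤ 1 - θ)]
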